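/- arXiv:1902.02478 — 5 statements merged into one kernel-verified Lean document; each statement's English description precedes it below -/
import Mathlib

section
/- Let C be an m×m complex matrix with eigenvalues η₁,...,η_m, and let A, B be n×n complex matrices. Then λ is an eigenvalue of A⊗I_m + B⊗C if and only if λ is an eigenvalue of A + η_k B for some k ∈ {1,...,m}. -/
open Matrix Kronecker

lemma exists_basis_zero_eq {m : ℕ} {v : Fin (m + 1) → ℂ} (hv : v ≠ 0) :
    ∃ b : Module.Basis (Fin (m + 1)) ℂ (Fin (m + 1) → ℂ), b 0 = v := by
  obtain ⟨N, hN⟩ := Submodule.exists_isCompl (Submodule.span ℂ {v})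
  have hrank : Module.finrank ℂ N = m := by
    have h1 : Module.finrank ℂ (Submodule.span ℂ {v}) = 1 := finrank_span_singleton hv
    have h2 := Submodule.finrank_add_eq_of_isCompl hN
    rw [h1] at h2
    simp [Module.finrank_pi] at h2
    omega
  let bN : Module.Basis (Fin m) ℂ N := (Module.finBasis ℂ N).reindex (finCongr hrank)
  have hli : ∀ (c : ℂ), ∀ x ∈ N, c • v + x = 0 → c = 0 := by
    intro c x hx hcx
    by_contra hc
    have hvN : v ∈ N := by
      have h3 : c • v = -x := by linear_combination (norm := module) hcx
      have h4 : v = c⁻¹ • (-x) := by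
        rw [← h3, smul_smul, inv_mul_cancel₀ hc, one_smul]
      rw [h4]
      exact N.smul_mem _ (N.neg_mem hx)
    have hvs : v ∈ Submodule.span ℂ {v} := Submodule.mem_span_singleton_self v
    have := hN.1
    have : v = 0 := by
      have := Submodule.disjoint_def.mp hN.1 v hvs hvN
      exact this
    exact hv this
  have hsp : ∀ z : Fin (m+1) → ℂ, ∃ c : ℂ, z + c • v ∈ N := by
    intro z
    have hz : z ∈ Submodule.span ℂ {v} ⊔ N := by rw [hN.2.eq_top]; trivial
    obtain ⟨a, ha, w, hw, rfl⟩ := Submodule.mem_sup.mp hz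
    obtain ⟨t, rfl⟩ := Submodule.mem_span_singleton.mp ha
    exact ⟨-t, by simpa using hw⟩
  refine ⟨Module.Basis.mkFinCons v bN hli hsp, ?_⟩
  rw [show ((Module.Basis.mkFinCons v bN hli hsp) 0) = _ from congrFun (Module.Basis.coe_mkFinCons v bN hli hsp) 0]
  simp

lemma exists_triangular : ∀ (m : ℕ) (C : Matrix (Fin m) (Fin m) ℂ),
    ∃ U V : Matrix (Fin m) (Fin m) ℂ, U * V = 1 ∧ V * U = 1 ∧
      (V * C * U).BlockTriangular id := by
  intro m
  induction m with
  | zero => exact fun C => ⟨1, 1, by simp, by simp, fun i _ _ => i.elim0⟩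
  | succ m ih =>
    intro C
    obtain ⟨η, hη⟩ := Module.End.exists_eigenvalue (C.mulVecLin)
    obtain ⟨v, hv⟩ := hη.exists_hasEigenvector
    have hv0 : v ≠ 0 := hv.2
    obtain ⟨b, hb0⟩ := exists_basis_zero_eq hv0
    set s : Module.Basis (Fin (m+1)) ℂ (Fin (m+1) → ℂ) := Pi.basisFun ℂ (Fin (m+1)) with hs
    set D : Matrix (Fin (m+1)) (Fin (m+1)) ℂ := LinearMap.toMatrix b b C.mulVecLin with hD
    have hCs : LinearMap.toMatrix s s C.mulVecLin = C := by
      rw [hs, LinearMap.toMatrix_eq_toMatrix', ← Matrix.toLin'_apply', LinearMap.toMatrix'_toLin']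
    have hQCP : b.toMatrix s * C * s.toMatrix b = D := by
      rw [← hCs]; exact basis_toMatrix_mul_linearMap_toMatrix_mul_basis_toMatrix b s b s C.mulVecLin
    have hPQ : s.toMatrix b * b.toMatrix s = 1 := Module.Basis.toMatrix_mul_toMatrix_flip s b
    have hQP : b.toMatrix s * s.toMatrix b = 1 := Module.Basis.toMatrix_mul_toMatrix_flip b s
    have hfv : C.mulVecLin v = η • v := hv.apply_eq_smul
    have hcol : ∀ i, D i 0 = if i = 0 then η else 0 := by
      intro i
      rw [hD, LinearMap.toMatrix_apply, hb0, hfv, ← hb0, LinearEquiv.map_smul, b.repr_self]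
      simp [Finsupp.single_apply, eq_comm]
    obtain ⟨U', V', hUV', hVU', htri'⟩ := ih (D.submatrix Fin.succ Fin.succ)
    set e : Fin 1 ⊕ Fin m ≃ Fin (m+1) := finSumFinEquiv.trans (finCongr (Nat.add_comm 1 m)) with he
    have he_l : ∀ x : Fin 1, e (Sum.inl x) = 0 := by
      intro x
      apply Fin.ext
      simp [he, Fin.val_eq_zero]
    have he_r : ∀ i : Fin m, e (Sum.inr i) = i.succ := by
      intro i
      apply Fin.ext
      simp [he, Nat.add_comm]
    have hsub_mul : ∀ (X Y : Matrix (Fin 1 ⊕ Fin m) (Fin 1 ⊕ Fin m) ℂ),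
        X.submatrix e.symm e.symm * Y.submatrix e.symm e.symm = (X * Y).submatrix e.symm e.symm :=
      fun X Y => Matrix.submatrix_mul_equiv X Y e.symm e.symm e.symm
    set U₂ : Matrix (Fin (m+1)) (Fin (m+1)) ℂ :=
      (fromBlocks 1 0 0 U').submatrix e.symm e.symm with hU₂
    set V₂ : Matrix (Fin (m+1)) (Fin (m+1)) ℂ :=
      (fromBlocks 1 0 0 V').submatrix e.symm e.symm with hV₂
    have hU₂V₂ : U₂ * V₂ = 1 := by
      rw [hU₂, hV₂, hsub_mul]
      simp [Matrix.fromBlocks_multiply, hUV']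
    have hV₂U₂ : V₂ * U₂ = 1 := by
      rw [hU₂, hV₂, hsub_mul]
      simp [Matrix.fromBlocks_multiply, hVU']
    obtain ⟨r, hr⟩ : ∃ r : Matrix (Fin 1) (Fin m) ℂ, r = Matrix.of fun _ j => D 0 j.succ :=
      ⟨_, rfl⟩
    obtain ⟨D'', hD''⟩ : ∃ X : Matrix (Fin m) (Fin m) ℂ, X = D.submatrix Fin.succ Fin.succ :=
      ⟨_, rfl⟩
    rw [← hD''] at htri'
    have hDblock : D = (fromBlocks (Matrix.of fun _ _ => η) r 0 D'').submatrix e.symm e.symm := by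
      ext i j
      obtain ⟨i', rfl⟩ : ∃ i', e i' = i := ⟨e.symm i, e.apply_symm_apply i⟩
      obtain ⟨j', rfl⟩ : ∃ j', e j' = j := ⟨e.symm j, e.apply_symm_apply j⟩
      simp only [Matrix.submatrix_apply, Equiv.symm_apply_apply]
      rcases i' with x | i' <;> rcases j' with y | j' <;>
        simp [hr, hD'', he_l, he_r, hcol, Fin.succ_ne_zero]
    have htriblocks : ∀ (X : Matrix (Fin 1) (Fin 1) ℂ) (r : Matrix (Fin 1) (Fin m) ℂ)
        (T' : Matrix (Fin m) (Fin m) ℂ), T'.BlockTriangular id →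
        ((fromBlocks X r 0 T').submatrix e.symm e.symm).BlockTriangular id := by
      intro X r T' hT' i j hij
      obtain ⟨i', rfl⟩ : ∃ i', e i' = i := ⟨e.symm i, e.apply_symm_apply i⟩
      obtain ⟨j', rfl⟩ : ∃ j', e j' = j := ⟨e.symm j, e.apply_symm_apply j⟩
      simp only [Matrix.submatrix_apply, Equiv.symm_apply_apply]
      rcases i' with x | i' <;> rcases j' with y | j'
      · rw [he_l, he_l] at hij; exact absurd hij (lt_irrefl _)
      · rw [he_l, he_r] at hij; exact absurd hij (Fin.not_lt_zero _)
      · simp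
      · rw [he_r, he_r] at hij
        exact hT' (Fin.succ_lt_succ_iff.mp hij)
    refine ⟨s.toMatrix b * U₂, V₂ * b.toMatrix s, ?_, ?_, ?_⟩
    · calc s.toMatrix b * U₂ * (V₂ * b.toMatrix s)
          = s.toMatrix b * (U₂ * V₂) * b.toMatrix s := by simp only [Matrix.mul_assoc]
        _ = 1 := by rw [hU₂V₂, Matrix.mul_one, hPQ]
    · calc V₂ * b.toMatrix s * (s.toMatrix b * U₂)
          = V₂ * (b.toMatrix s * s.toMatrix b) * U₂ := by simp only [Matrix.mul_assoc]
        _ = 1 := by rw [hQP, Matrix.mul_one, hV₂U₂]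
    · have key : V₂ * b.toMatrix s * C * (s.toMatrix b * U₂) =
          (fromBlocks (Matrix.of fun _ _ => η) (r * U') 0
            (V' * D'' * U')).submatrix e.symm e.symm := by
        have h1 : V₂ * b.toMatrix s * C * (s.toMatrix b * U₂) = V₂ * (b.toMatrix s * C * s.toMatrix b) * U₂ := by
          simp only [Matrix.mul_assoc]
        rw [h1, hQCP, hDblock, hV₂, hU₂, hsub_mul, hsub_mul]
        congr 1
        simp [Matrix.fromBlocks_multiply, Matrix.mul_assoc]
      rw [key]
      exact htriblocks _ _ _ htri'

lemma mem_spectrum_iff_det {k : Type*} [Fintype k] [DecidableEq k] (M : Matrix k k ℂ) (lam : ℂ) :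
    lam ∈ spectrum ℂ M ↔ (lam • (1 : Matrix k k ℂ) - M).det = 0 := by
  rw [spectrum.mem_iff, Matrix.isUnit_iff_isUnit_det, isUnit_iff_ne_zero, not_not,
    Algebra.algebraMap_eq_smul_one]

/-- Eigenvalues of `A ⊗ I_m + B ⊗ C`: `λ` is an eigenvalue of `A ⊗ I_m + B ⊗ C`
iff `λ` is an eigenvalue of `A + η • B` for some eigenvalue `η` of `C`. -/
theorem kronecker_eigenvalue_iff {n m : ℕ}
    (A B : Matrix (Fin n) (Fin n) ℂ) (C : Matrix (Fin m) (Fin m) ℂ) (lam : ℂ) :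
    lam ∈ spectrum ℂ (A ⊗ₖ (1 : Matrix (Fin m) (Fin m) ℂ) + B ⊗ₖ C) ↔
      ∃ η ∈ spectrum ℂ C, lam ∈ spectrum ℂ (A + η • B) := by
  obtain ⟨U, V, hUV, hVU, htri⟩ := exists_triangular m C
  obtain ⟨T, hT⟩ : ∃ T : Matrix (Fin m) (Fin m) ℂ, T = V * C * U := ⟨_, rfl⟩
  rw [← hT] at htri
  have hC : U * T * V = C := by
    rw [hT]
    simp only [← Matrix.mul_assoc, hUV, Matrix.one_mul]
    rw [Matrix.mul_assoc, hUV, Matrix.mul_one]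
  obtain ⟨X, hX⟩ : ∃ X : Matrix (Fin n) (Fin n) ℂ, X = lam • 1 - A := ⟨_, rfl⟩
  -- step 1 : split the shifted big matrix
  have hsplit : lam • (1 : Matrix (Fin n × Fin m) (Fin n × Fin m) ℂ) -
      (A ⊗ₖ (1 : Matrix (Fin m) (Fin m) ℂ) + B ⊗ₖ C) =
      X ⊗ₖ (1 : Matrix (Fin m) (Fin m) ℂ) - B ⊗ₖ C := by
    ext ⟨i, j⟩ ⟨k, l⟩
    by_cases hjl : j = l <;> by_cases hik : i = k <;>
      simp [Matrix.one_apply, hjl, hik, Prod.ext_iff, Matrix.kroneckerMap_apply, hX,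
        Matrix.sub_apply, Matrix.smul_apply] <;> ring
  -- step 2 : conjugation
  have hconj : X ⊗ₖ (1 : Matrix (Fin m) (Fin m) ℂ) - B ⊗ₖ C =
      ((1 : Matrix (Fin n) (Fin n) ℂ) ⊗ₖ U) *
        (X ⊗ₖ (1 : Matrix (Fin m) (Fin m) ℂ) - B ⊗ₖ T) *
        ((1 : Matrix (Fin n) (Fin n) ℂ) ⊗ₖ V) := by
    simp only [Matrix.mul_sub, Matrix.sub_mul, ← Matrix.mul_kronecker_mul,
      Matrix.mul_one, Matrix.one_mul, hUV, hC]
  -- step 3 : determinant is preserved by the conjugation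
  have hdet1 : (X ⊗ₖ (1 : Matrix (Fin m) (Fin m) ℂ) - B ⊗ₖ C).det =
      (X ⊗ₖ (1 : Matrix (Fin m) (Fin m) ℂ) - B ⊗ₖ T).det := by
    rw [hconj, Matrix.det_mul, Matrix.det_mul]
    have : ((1 : Matrix (Fin n) (Fin n) ℂ) ⊗ₖ U).det * ((1 : Matrix (Fin n) (Fin n) ℂ) ⊗ₖ V).det
        = 1 := by
      rw [← Matrix.det_mul, ← Matrix.mul_kronecker_mul, Matrix.mul_one, hUV,
        Matrix.one_kronecker_one, Matrix.det_one]
    calc ((1 : Matrix (Fin n) (Fin n) ℂ) ⊗ₖ U).det *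
          (X ⊗ₖ (1 : Matrix (Fin m) (Fin m) ℂ) - B ⊗ₖ T).det *
          ((1 : Matrix (Fin n) (Fin n) ℂ) ⊗ₖ V).det
        = (X ⊗ₖ (1 : Matrix (Fin m) (Fin m) ℂ) - B ⊗ₖ T).det *
          (((1 : Matrix (Fin n) (Fin n) ℂ) ⊗ₖ U).det *
            ((1 : Matrix (Fin n) (Fin n) ℂ) ⊗ₖ V).det) := by ring
      _ = _ := by rw [this, mul_one]
  -- step 4 : block triangularity
  have hbt : (X ⊗ₖ (1 : Matrix (Fin m) (Fin m) ℂ) - B ⊗ₖ T).BlockTriangular Prod.snd := by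
    intro p q h
    have h1 : (1 : Matrix (Fin m) (Fin m) ℂ) p.2 q.2 = 0 := Matrix.one_apply_ne (ne_of_gt h)
    have h2 : T p.2 q.2 = 0 := htri h
    simp [Matrix.kroneckerMap_apply, h1, h2]
  -- step 5 + 6 : determinant as a product over diagonal blocks
  have hblockdet : (X ⊗ₖ (1 : Matrix (Fin m) (Fin m) ℂ) - B ⊗ₖ T).det =
      ∏ l : Fin m, (lam • (1 : Matrix (Fin n) (Fin n) ℂ) - (A + T l l • B)).det := by
    rw [hbt.det_fintype]
    refine Finset.prod_congr rfl fun l _ => ?_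
    let el : Fin n ≃ {p : Fin n × Fin m // p.2 = l} :=
      ⟨fun i => ⟨(i, l), rfl⟩, fun p => p.1.1,
        fun i => rfl, fun p => by
          obtain ⟨⟨p1, p2⟩, hp⟩ := p
          simp only at hp
          subst hp
          rfl⟩
    rw [← Matrix.det_submatrix_equiv_self el]
    congr 1
    ext i k
    simp [Matrix.toSquareBlock_def, el, Matrix.kroneckerMap_apply, Matrix.one_apply, hX,
      Matrix.sub_apply, Matrix.smul_apply, Matrix.add_apply]
    ring
  -- step 7 : spectrum of C is the diagonal of T
  have hdiag : ∀ η : ℂ, η ∈ spectrum ℂ C ↔ ∃ j : Fin m, η = T j j := by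
    intro η
    have hconjC : η • (1 : Matrix (Fin m) (Fin m) ℂ) - C =
        U * (η • (1 : Matrix (Fin m) (Fin m) ℂ) - T) * V := by
      simp only [Matrix.mul_sub, Matrix.sub_mul, Matrix.mul_smul, Matrix.smul_mul,
        Matrix.mul_one, Matrix.one_mul, hUV, hC]
    have hTtri : (η • (1 : Matrix (Fin m) (Fin m) ℂ) - T).BlockTriangular id := by
      intro i j hij
      have h1 : (1 : Matrix (Fin m) (Fin m) ℂ) i j = 0 := Matrix.one_apply_ne (ne_of_gt hij)
      have h2 : T i j = 0 := htri hij
      simp [h1, h2]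
    have hdetT : (η • (1 : Matrix (Fin m) (Fin m) ℂ) - T).det = ∏ j : Fin m, (η - T j j) := by
      rw [Matrix.det_of_upperTriangular hTtri]
      refine Finset.prod_congr rfl fun j _ => ?_
      simp [Matrix.one_apply]
    have hdetC : (η • (1 : Matrix (Fin m) (Fin m) ℂ) - C).det = ∏ j : Fin m, (η - T j j) := by
      rw [hconjC, Matrix.det_mul, Matrix.det_mul]
      calc U.det * (η • (1 : Matrix (Fin m) (Fin m) ℂ) - T).det * V.det
          = (η • (1 : Matrix (Fin m) (Fin m) ℂ) - T).det * (U.det * V.det) := by ring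
        _ = (η • (1 : Matrix (Fin m) (Fin m) ℂ) - T).det := by
            rw [← Matrix.det_mul, hUV, Matrix.det_one, mul_one]
        _ = _ := hdetT
    rw [mem_spectrum_iff_det, hdetC, Finset.prod_eq_zero_iff]
    constructor
    · rintro ⟨j, -, hj⟩
      exact ⟨j, sub_eq_zero.mp hj⟩
    · rintro ⟨j, hj⟩
      exact ⟨j, Finset.mem_univ j, by rw [hj, sub_self]⟩
  -- finish
  rw [mem_spectrum_iff_det, hsplit, hdet1, hblockdet, Finset.prod_eq_zero_iff]
  constructor
  · rintro ⟨l, -, hl⟩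
    exact ⟨T l l, (hdiag _).mpr ⟨l, rfl⟩, (mem_spectrum_iff_det _ _).mpr hl⟩
  · rintro ⟨η, hη, hlam⟩
    obtain ⟨j, rfl⟩ := (hdiag η).mp hη
    exact ⟨j, Finset.mem_univ j, (mem_spectrum_iff_det _ _).mp hlam⟩
end

section
/- Let Γ, Σ, Ξ, Υ be n×n real diagonal matrices with positive diagonal entries such that Γ − Σ is positive definite (i.e., every diagonal entry of Γ exceeds the corresponding entry of Σ). Then the 3n×3n block matrix A = [[−Γ, 0, Υ], [−Σ, 0, 0], [−Ξ, Ξ, 0]] is Hurwitz, i.e., every eigenvalue of A has negative real part. -/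
open Matrix

/-- A real square matrix is Hurwitz if every eigenvalue (over `ℂ`) has
strictly negative real part. -/
def IsHurwitz {n : Type*} [Fintype n] [DecidableEq n] (A : Matrix n n ℝ) : Prop :=
  ∀ μ ∈ spectrum ℂ (A.map (Complex.ofReal)), μ.re < 0

private lemma diag_dot {n : ℕ} (D : Matrix (Fin n) (Fin n) ℝ) (hD : D.IsDiag)
    (w : Fin n → ℂ) (i : Fin n) :
    ∑ j, (D i j : ℂ) * w j = (D i i : ℂ) * w i := by
  apply Finset.sum_eq_single
  · intro b _ hb
    rw [hD (Ne.symm hb)]; simp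
  · intro hmem; exact absurd (Finset.mem_univ i) hmem

private lemma cubic_re_neg (a b c : ℝ) (ha : 0 < a) (hb : 0 < b) (hc : 0 < c)
    (habc : c < a * b) (μ : ℂ)
    (h : μ^3 + (a:ℂ)*μ^2 + (b:ℂ)*μ + (c:ℂ) = 0) : μ.re < 0 := by
  by_contra hx
  push_neg at hx
  obtain ⟨x, y⟩ := μ
  have hre := congrArg Complex.re h
  have him := congrArg Complex.im h
  simp [pow_succ, Complex.add_re, Complex.add_im, Complex.mul_re, Complex.mul_im,
    Complex.ofReal_re, Complex.ofReal_im] at hre him hx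
  rcases eq_or_ne y 0 with hy | hy
  · subst hy
    simp at hre him
    nlinarith [hre, sq_nonneg x, mul_pos ha hb]
  · have hy2 : y^2 = 3*x^2 + 2*a*x + b := by
      have h2 : y * (3*x^2 - y^2 + 2*a*x + b) = 0 := by nlinarith [him]
      have := (mul_eq_zero.mp h2).resolve_left hy
      nlinarith [this]
    have key : 8*x^3 + 8*a*x^2 + 2*(b + a^2)*x + (a*b - c) = 0 := by
      linear_combination -hre - (3*x + a) * hy2
    nlinarith [key, mul_nonneg (mul_nonneg hx hx) hx, mul_nonneg hx hx,
      mul_nonneg ha.le (mul_nonneg hx hx), mul_nonneg hb.le hx,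
      mul_nonneg (mul_nonneg ha.le ha.le) hx]

/-- If `Γ, Σ, Ξ, Υ` are `n × n` real diagonal matrices with positive diagonal
entries and `Γ i i > Σ i i` for all `i`, then the block matrix
`[[−Γ, 0, Υ], [−Σ, 0, 0], [−Ξ, Ξ, 0]]` is Hurwitz. -/
theorem pll_block_hurwitz {n : ℕ}
    (Γ Sig Ξ Υ : Matrix (Fin n) (Fin n) ℝ)
    (hΓd : Γ.IsDiag) (hSigd : Sig.IsDiag) (hΞd : Ξ.IsDiag) (hΥd : Υ.IsDiag)
    (hΓ : ∀ i, 0 < Γ i i) (hSig : ∀ i, 0 < Sig i i)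
    (hΞ : ∀ i, 0 < Ξ i i) (hΥ : ∀ i, 0 < Υ i i)
    (hGamSig : ∀ i, Sig i i < Γ i i) :
    IsHurwitz (Matrix.fromBlocks (-Γ) (Matrix.fromCols 0 Υ)
      (Matrix.fromRows (-Sig) (-Ξ)) (Matrix.fromBlocks 0 0 Ξ 0)) := by
  intro μ hμ
  set M := ((Matrix.fromBlocks (-Γ) (Matrix.fromCols 0 Υ)
      (Matrix.fromRows (-Sig) (-Ξ)) (Matrix.fromBlocks 0 0 Ξ 0)).map (Complex.ofReal)) with hM
  rw [spectrum.mem_iff] at hμ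
  have hdet : (μ • (1 : Matrix _ _ ℂ) - M).det = 0 := by
    by_contra hd
    exact hμ (by
      rw [Algebra.algebraMap_eq_smul_one]
      exact (Matrix.isUnit_iff_isUnit_det _).mpr (isUnit_iff_ne_zero.mpr hd))
  obtain ⟨v, hv0, hv⟩ := (Matrix.exists_mulVec_eq_zero_iff).mpr hdet
  have hv' : M *ᵥ v = μ • v := by
    have h := hv
    rw [Matrix.sub_mulVec, Matrix.smul_mulVec, Matrix.one_mulVec, sub_eq_zero] at h
    exact h.symm
  -- componentwise equations
  have key : ∀ i : Fin n,
      (-(Γ i i : ℂ)) * v (Sum.inl i) + (Υ i i : ℂ) * v (Sum.inr (Sum.inr i)) = μ * v (Sum.inl i) ∧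
      (-(Sig i i : ℂ)) * v (Sum.inl i) = μ * v (Sum.inr (Sum.inl i)) ∧
      (-(Ξ i i : ℂ)) * v (Sum.inl i) + (Ξ i i : ℂ) * v (Sum.inr (Sum.inl i))
        = μ * v (Sum.inr (Sum.inr i)) := by
    intro i
    have h1 := congrFun hv' (Sum.inl i)
    have h2 := congrFun hv' (Sum.inr (Sum.inl i))
    have h3 := congrFun hv' (Sum.inr (Sum.inr i))
    simp [hM, Matrix.mulVec, dotProduct, Fintype.sum_sum_type, Pi.smul_apply,
      smul_eq_mul, neg_mul, Finset.sum_neg_distrib] at h1 h2 h3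
    rw [diag_dot Γ hΓd _ i, diag_dot Υ hΥd _ i] at h1
    rw [diag_dot Sig hSigd _ i] at h2
    rw [diag_dot Ξ hΞd (fun j => v (Sum.inl j)) i,
      diag_dot Ξ hΞd (fun j => v (Sum.inr (Sum.inl j))) i] at h3
    exact ⟨by linear_combination h1, by linear_combination h2, by linear_combination h3⟩
  -- find an index where v is nonzero
  have hex : ∃ k, v k ≠ 0 := Function.ne_iff.mp hv0
  obtain ⟨k, hk⟩ := hex
  -- extract the relevant coordinate
  have main : ∀ i : Fin n, v (Sum.inl i) ≠ 0 ∨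
      (v (Sum.inl i) = 0 ∧ v (Sum.inr (Sum.inl i)) = 0 ∧ v (Sum.inr (Sum.inr i)) = 0) := by
    intro i
    obtain ⟨e1, e2, e3⟩ := key i
    by_cases hx : v (Sum.inl i) = 0
    · right
      refine ⟨hx, ?_, ?_⟩
      · -- from e1 : υ z = 0 so z = 0; then e3 : ξ y = 0 so y = 0
        have hz : v (Sum.inr (Sum.inr i)) = 0 := by
          rw [hx] at e1
          simp at e1
          rcases e1 with h | h
          · exact absurd h (by exact_mod_cast (hΥ i).ne')
          · exact h
        rw [hx, hz] at e3
        simp at e3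
        rcases e3 with h | h
        · exact absurd h (by exact_mod_cast (hΞ i).ne')
        · exact h
      · rw [hx] at e1
        simp at e1
        rcases e1 with h | h
        · exact absurd h (by exact_mod_cast (hΥ i).ne')
        · exact h
    · left; exact hx
  -- get an index i with v (inl i) ≠ 0
  have hxi : ∃ i : Fin n, v (Sum.inl i) ≠ 0 := by
    rcases k with i | i | i
    · exact ⟨i, (main i).resolve_right (fun h => hk h.1)⟩
    · exact ⟨i, (main i).resolve_right (fun h => hk h.2.1)⟩
    · exact ⟨i, (main i).resolve_right (fun h => hk h.2.2)⟩
  obtain ⟨i, hx⟩ := hxi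
  obtain ⟨e1, e2, e3⟩ := key i
  -- derive the cubic equation
  have hcube : (μ^3 + (Γ i i : ℂ)*μ^2 + ((Υ i i * Ξ i i : ℝ) : ℂ)*μ
      + ((Υ i i * Ξ i i * Sig i i : ℝ) : ℂ)) * v (Sum.inl i) = 0 := by
    push_cast
    linear_combination -μ^2 * e1 - (Υ i i : ℂ) * μ * e3 - (Υ i i : ℂ) * (Ξ i i : ℂ) * e2
  have hpoly : μ^3 + ((Γ i i : ℝ) : ℂ)*μ^2 + ((Υ i i * Ξ i i : ℝ) : ℂ)*μ
      + ((Υ i i * Ξ i i * Sig i i : ℝ) : ℂ) = 0 := by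
    rcases mul_eq_zero.mp hcube with h | h
    · exact h
    · exact absurd h hx
  exact cubic_re_neg (Γ i i) (Υ i i * Ξ i i) (Υ i i * Ξ i i * Sig i i)
    (hΓ i) (mul_pos (hΥ i) (hΞ i)) (mul_pos (mul_pos (hΥ i) (hΞ i)) (hSig i))
    (by nlinarith [mul_pos (hΥ i) (hΞ i), hGamSig i, hSig i]) μ hpoly
end

section
/- Let Γ, Π, Ξ, Υ ∈ ℝ^{n×n} and Θ ∈ ℝ^{m×m} be diagonal matrices with positive diagonal entries, K ∈ ℝ^{m×n} with trivial kernel (Ker(K) = {0}), P ∈ ℝ^{n×n} skew-symmetric, and Z ∈ ℝ^{m×m} with Z + Zᵀ negative definite. Then the (3n+m)×(3n+m) block matrix B = [[0, −Γ, 0, 0], [Ξ, −Υ, −Ξ, 0], [0, Π, ΠP, −ΠKᵀ], [0, 0, ΘK, ΘZ]] is Hurwitz. -/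
open Matrix

private lemma diag_sum_c {n : ℕ} {D : Matrix (Fin n) (Fin n) ℝ} (hD : D.IsDiag)
    (x : Fin n → ℂ) (i : Fin n) :
    ∑ j, (D i j : ℂ) * x j = (D i i : ℂ) * x i := by
  refine Finset.sum_eq_single i (fun j _ hj => ?_) (by simp)
  rw [hD (Ne.symm hj)]; simp

private lemma reconj (a b : ℂ) :
    ((starRingEnd ℂ) a * b).re = ((starRingEnd ℂ) b * a).re := by
  simp [Complex.mul_re, Complex.conj_re, Complex.conj_im]; ring

/-- real part of conj a * b in coordinates -/
private lemma reconj_coord (a b : ℂ) :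
    ((starRingEnd ℂ) a * b).re = a.re * b.re + a.im * b.im := by
  simp [Complex.mul_re, Complex.conj_re, Complex.conj_im]
  try ring

/-- For a real matrix `Z` whose negated symmetrization is PosDef, the quadratic
form `∑ j l, Z j l * y j * y l` is nonpositive, and zero only at `y = 0`. -/
private lemma quad_neg {m : ℕ} {Z : Matrix (Fin m) (Fin m) ℝ}
    (hZ : (-(Z + Zᵀ)).PosDef) (y : Fin m → ℝ) :
    (∑ j, ∑ l, Z j l * y j * y l) ≤ 0 ∧
      ((∑ j, ∑ l, Z j l * y j * y l) = 0 → y = 0) := by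
  have expand : y ⬝ᵥ ((-(Z + Zᵀ)) *ᵥ y)
      = (∑ j, ∑ l, -(Z j l * y j * y l)) + (∑ j, ∑ l, -(Z l j * y j * y l)) := by
    rw [← Finset.sum_add_distrib]
    simp only [dotProduct, Matrix.mulVec, Matrix.neg_apply, Matrix.add_apply,
      Matrix.transpose_apply]
    refine Finset.sum_congr rfl fun j _ => ?_
    rw [Finset.mul_sum, ← Finset.sum_add_distrib]
    refine Finset.sum_congr rfl fun l _ => by ring
  have hswap : (∑ j, ∑ l, -(Z l j * y j * y l)) = ∑ j, ∑ l, -(Z j l * y j * y l) := by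
    rw [Finset.sum_comm]
    exact Finset.sum_congr rfl fun j _ => Finset.sum_congr rfl fun l _ => by ring
  have hneg : (∑ j, ∑ l, -(Z j l * y j * y l)) = -∑ j, ∑ l, Z j l * y j * y l := by
    simp [Finset.sum_neg_distrib]
  have hdot : y ⬝ᵥ ((-(Z + Zᵀ)) *ᵥ y) = -(2 * ∑ j, ∑ l, Z j l * y j * y l) := by
    rw [expand, hswap, hneg]; ring
  constructor
  · have h0 : 0 ≤ y ⬝ᵥ ((-(Z + Zᵀ)) *ᵥ y) := by
      have := hZ.posSemidef.dotProduct_mulVec_nonneg y; simpa using this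
    rw [hdot] at h0; linarith
  · intro h0
    by_contra hy
    have hpos := hZ.dotProduct_mulVec_pos hy
    have hpos' : (0:ℝ) < y ⬝ᵥ ((-(Z + Zᵀ)) *ᵥ y) := by simpa using hpos
    rw [hdot, h0] at hpos'
    simp at hpos'

/-- The block matrix `B = [[0, −Γ, 0, 0], [Ξ, −Υ, −Ξ, 0], [0, Π, ΠP, −ΠKᵀ],
[0, 0, ΘK, ΘZ]]` is Hurwitz when `Γ, Π, Ξ, Υ, Θ` are diagonal with positive
diagonal entries, `K` has trivial kernel, `P` is skew-symmetric, and `Z + Zᵀ`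
is negative definite. -/
theorem big_block_hurwitz {n m : ℕ}
    (Γ Pi' Ξ Υ P : Matrix (Fin n) (Fin n) ℝ)
    (Θ Z : Matrix (Fin m) (Fin m) ℝ) (K : Matrix (Fin m) (Fin n) ℝ)
    (hΓd : Γ.IsDiag) (hPid : Pi'.IsDiag) (hΞd : Ξ.IsDiag) (hΥd : Υ.IsDiag)
    (hΘd : Θ.IsDiag)
    (hΓ : ∀ i, 0 < Γ i i) (hPi : ∀ i, 0 < Pi' i i)
    (hΞ : ∀ i, 0 < Ξ i i) (hΥ : ∀ i, 0 < Υ i i) (hΘ : ∀ i, 0 < Θ i i)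
    (hK : ∀ x : Fin n → ℝ, K.mulVec x = 0 → x = 0)
    (hP : Pᵀ = -P)
    (hZ : (-(Z + Zᵀ)).PosDef) :
    IsHurwitz (Matrix.fromBlocks
      (Matrix.fromBlocks 0 (-Γ) Ξ (-Υ))
      (Matrix.fromBlocks 0 0 (-Ξ) 0)
      (Matrix.fromBlocks 0 Pi' 0 0)
      (Matrix.fromBlocks (Pi' * P) (-(Pi' * Kᵀ)) (Θ * K) (Θ * Z))) := by
  intro μ hμ
  by_contra hre
  push_neg at hre
  -- extract an eigenvector
  rw [spectrum.mem_iff, Matrix.isUnit_iff_isUnit_det, isUnit_iff_ne_zero, not_not,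
    ← Matrix.exists_mulVec_eq_zero_iff] at hμ
  obtain ⟨v, hv, hv0⟩ := hμ
  have halg : (algebraMap ℂ (Matrix ((Fin n ⊕ Fin n) ⊕ (Fin n ⊕ Fin m))
      ((Fin n ⊕ Fin n) ⊕ (Fin n ⊕ Fin m)) ℂ)) μ *ᵥ v = μ • v := by
    funext i
    simp [Matrix.algebraMap_eq_diagonal, Matrix.mulVec_diagonal]
  rw [Matrix.sub_mulVec, sub_eq_zero, halg] at hv0
  have hv0' := hv0.symm
  -- component equations
  have E1 : ∀ i, μ * v (Sum.inl (Sum.inl i)) = -((Γ i i : ℂ) * v (Sum.inl (Sum.inr i))) := by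
    intro i
    have h := congrFun hv0' (Sum.inl (Sum.inl i))
    simp only [Pi.smul_apply, smul_eq_mul] at h
    simp only [Matrix.mulVec, dotProduct, Fintype.sum_sum_type, Matrix.fromBlocks,
      Matrix.map_apply, Matrix.of_apply, Sum.elim_inl, Sum.elim_inr, Matrix.zero_apply,
      Complex.ofReal_zero, zero_mul, Finset.sum_const_zero, add_zero, zero_add,
      Matrix.neg_apply, Complex.ofReal_neg, neg_mul, Finset.sum_neg_distrib] at h
    rw [← h, diag_sum_c hΓd]
  have E2 : ∀ i, μ * v (Sum.inl (Sum.inr i)) =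
      (Ξ i i : ℂ) * v (Sum.inl (Sum.inl i)) - (Υ i i : ℂ) * v (Sum.inl (Sum.inr i))
        - (Ξ i i : ℂ) * v (Sum.inr (Sum.inl i)) := by
    intro i
    have h := congrFun hv0' (Sum.inl (Sum.inr i))
    simp only [Pi.smul_apply, smul_eq_mul] at h
    simp only [Matrix.mulVec, dotProduct, Fintype.sum_sum_type, Matrix.fromBlocks,
      Matrix.map_apply, Matrix.of_apply, Sum.elim_inl, Sum.elim_inr, Matrix.zero_apply,
      Complex.ofReal_zero, zero_mul, Finset.sum_const_zero, add_zero, zero_add,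
      Matrix.neg_apply, Complex.ofReal_neg, neg_mul, Finset.sum_neg_distrib] at h
    rw [← h, diag_sum_c hΞd, diag_sum_c hΥd, diag_sum_c hΞd]
    ring
  have E3 : ∀ i, μ * v (Sum.inr (Sum.inl i)) =
      (Pi' i i : ℂ) * v (Sum.inl (Sum.inr i))
        + (Pi' i i : ℂ) * (∑ j, (P i j : ℂ) * v (Sum.inr (Sum.inl j)))
        - (Pi' i i : ℂ) * (∑ j, (K j i : ℂ) * v (Sum.inr (Sum.inr j))) := by
    intro i
    have h := congrFun hv0' (Sum.inr (Sum.inl i))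
    simp only [Pi.smul_apply, smul_eq_mul] at h
    simp only [Matrix.mulVec, dotProduct, Fintype.sum_sum_type, Matrix.fromBlocks,
      Matrix.map_apply, Matrix.of_apply, Sum.elim_inl, Sum.elim_inr, Matrix.zero_apply,
      Matrix.mul_apply, Matrix.transpose_apply, Complex.ofReal_zero, zero_mul,
      Finset.sum_const_zero, add_zero, zero_add, Matrix.neg_apply, Complex.ofReal_neg,
      neg_mul, Finset.sum_neg_distrib, Complex.ofReal_sum, Complex.ofReal_mul] at h
    rw [← h, diag_sum_c hPid]
    have hP1 : ∀ x : Fin n, (∑ k, (Pi' i k : ℂ) * (P k x : ℂ)) = (Pi' i i : ℂ) * (P i x : ℂ) :=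
      fun x => diag_sum_c hPid (fun k => (P k x : ℂ)) i
    have hK1 : ∀ x : Fin m, (∑ k, (Pi' i k : ℂ) * (K x k : ℂ)) = (Pi' i i : ℂ) * (K x i : ℂ) :=
      fun x => diag_sum_c hPid (fun k => (K x k : ℂ)) i
    simp only [hP1, hK1, mul_assoc, ← Finset.mul_sum]
    ring
  have E4 : ∀ j, μ * v (Sum.inr (Sum.inr j)) =
      (Θ j j : ℂ) * (∑ i, (K j i : ℂ) * v (Sum.inr (Sum.inl i)))
        + (Θ j j : ℂ) * (∑ l, (Z j l : ℂ) * v (Sum.inr (Sum.inr l))) := by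
    intro j
    have h := congrFun hv0' (Sum.inr (Sum.inr j))
    simp only [Pi.smul_apply, smul_eq_mul] at h
    simp only [Matrix.mulVec, dotProduct, Fintype.sum_sum_type, Matrix.fromBlocks,
      Matrix.map_apply, Matrix.of_apply, Sum.elim_inl, Sum.elim_inr, Matrix.zero_apply,
      Matrix.mul_apply, Matrix.transpose_apply, Complex.ofReal_zero, zero_mul,
      Finset.sum_const_zero, add_zero, zero_add, Matrix.neg_apply, Complex.ofReal_neg,
      neg_mul, Finset.sum_neg_distrib, Complex.ofReal_sum, Complex.ofReal_mul] at h
    rw [← h]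
    have hK1 : ∀ x : Fin n, (∑ k, (Θ j k : ℂ) * (K k x : ℂ)) = (Θ j j : ℂ) * (K j x : ℂ) :=
      fun x => diag_sum_c hΘd (fun k => (K k x : ℂ)) j
    have hZ1 : ∀ x : Fin m, (∑ k, (Θ j k : ℂ) * (Z k x : ℂ)) = (Θ j j : ℂ) * (Z j x : ℂ) :=
      fun x => diag_sum_c hΘd (fun k => (Z k x : ℂ)) j
    simp only [hK1, hZ1, mul_assoc, ← Finset.mul_sum]
  -- abbreviations
  set x1 : Fin n → ℂ := fun i => v (Sum.inl (Sum.inl i)) with hx1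
  set x2 : Fin n → ℂ := fun i => v (Sum.inl (Sum.inr i)) with hx2
  set x3 : Fin n → ℂ := fun i => v (Sum.inr (Sum.inl i)) with hx3
  set x4 : Fin m → ℂ := fun j => v (Sum.inr (Sum.inr j)) with hx4
  have E1' : ∀ i, μ * x1 i = -((Γ i i : ℂ) * x2 i) := E1
  have E2' : ∀ i, μ * x2 i = (Ξ i i : ℂ) * x1 i - (Υ i i : ℂ) * x2 i - (Ξ i i : ℂ) * x3 i := E2
  have E3' : ∀ i, μ * x3 i = (Pi' i i : ℂ) * x2 i
      + (Pi' i i : ℂ) * (∑ j, (P i j : ℂ) * x3 j)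
      - (Pi' i i : ℂ) * (∑ j, (K j i : ℂ) * x4 j) := E3
  have E4' : ∀ j, μ * x4 j = (Θ j j : ℂ) * (∑ i, (K j i : ℂ) * x3 i)
      + (Θ j j : ℂ) * (∑ l, (Z j l : ℂ) * x4 l) := E4
  clear E1 E2 E3 E4 hv0 hv0'
  -- real-part per-index identities
  have r1 : ∀ i, μ.re * (Complex.normSq (x1 i) / Γ i i)
      = -((starRingEnd ℂ) (x1 i) * x2 i).re := by
    intro i
    have h : (Complex.normSq (x1 i) : ℂ) * μ
        = -((Γ i i : ℂ) * ((starRingEnd ℂ) (x1 i) * x2 i)) := by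
      rw [Complex.normSq_eq_conj_mul_self]
      linear_combination (starRingEnd ℂ) (x1 i) * E1' i
    have hre2 := congrArg Complex.re h
    simp only [Complex.re_ofReal_mul, Complex.neg_re, Complex.add_re, Complex.sub_re] at hre2
    rw [← mul_div_assoc, div_eq_iff (ne_of_gt (hΓ i))]
    linear_combination hre2
  have r2 : ∀ i, μ.re * (Complex.normSq (x2 i) / Ξ i i)
      = ((starRingEnd ℂ) (x2 i) * x1 i).re
        - (Υ i i / Ξ i i) * Complex.normSq (x2 i)
        - ((starRingEnd ℂ) (x2 i) * x3 i).re := by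
    intro i
    have h : (Complex.normSq (x2 i) : ℂ) * μ
        = (Ξ i i : ℂ) * ((starRingEnd ℂ) (x2 i) * x1 i)
          - (Υ i i : ℂ) * (Complex.normSq (x2 i) : ℂ)
          - (Ξ i i : ℂ) * ((starRingEnd ℂ) (x2 i) * x3 i) := by
      rw [Complex.normSq_eq_conj_mul_self]
      linear_combination (starRingEnd ℂ) (x2 i) * E2' i
    have hre2 := congrArg Complex.re h
    simp only [Complex.re_ofReal_mul, Complex.neg_re, Complex.add_re, Complex.sub_re,
      Complex.ofReal_re] at hre2
    rw [← mul_div_assoc, div_eq_iff (ne_of_gt (hΞ i))]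
    have hcan : Υ i i / Ξ i i * Complex.normSq (x2 i) * Ξ i i
        = Υ i i * Complex.normSq (x2 i) := by
      rw [div_mul_eq_mul_div, div_mul_eq_mul_div, mul_div_assoc,
        div_self (ne_of_gt (hΞ i)), mul_one]
    linear_combination hre2 + hcan
  have r3 : ∀ i, μ.re * (Complex.normSq (x3 i) / Pi' i i)
      = ((starRingEnd ℂ) (x3 i) * x2 i).re
        + ((starRingEnd ℂ) (x3 i) * (∑ j, (P i j : ℂ) * x3 j)).re
        - ((starRingEnd ℂ) (x3 i) * (∑ j, (K j i : ℂ) * x4 j)).re := by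
    intro i
    have h : (Complex.normSq (x3 i) : ℂ) * μ
        = (Pi' i i : ℂ) * ((starRingEnd ℂ) (x3 i) * x2 i)
          + (Pi' i i : ℂ) * ((starRingEnd ℂ) (x3 i) * (∑ j, (P i j : ℂ) * x3 j))
          - (Pi' i i : ℂ) * ((starRingEnd ℂ) (x3 i) * (∑ j, (K j i : ℂ) * x4 j)) := by
      rw [Complex.normSq_eq_conj_mul_self]
      linear_combination (starRingEnd ℂ) (x3 i) * E3' i
    have hre2 := congrArg Complex.re h
    simp only [Complex.re_ofReal_mul, Complex.neg_re, Complex.add_re, Complex.sub_re] at hre2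
    rw [← mul_div_assoc, div_eq_iff (ne_of_gt (hPi i))]
    linear_combination hre2
  have r4 : ∀ j, μ.re * (Complex.normSq (x4 j) / Θ j j)
      = ((starRingEnd ℂ) (x4 j) * (∑ i, (K j i : ℂ) * x3 i)).re
        + ((starRingEnd ℂ) (x4 j) * (∑ l, (Z j l : ℂ) * x4 l)).re := by
    intro j
    have h : (Complex.normSq (x4 j) : ℂ) * μ
        = (Θ j j : ℂ) * ((starRingEnd ℂ) (x4 j) * (∑ i, (K j i : ℂ) * x3 i))
          + (Θ j j : ℂ) * ((starRingEnd ℂ) (x4 j) * (∑ l, (Z j l : ℂ) * x4 l)) := by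
      rw [Complex.normSq_eq_conj_mul_self]
      linear_combination (starRingEnd ℂ) (x4 j) * E4' j
    have hre2 := congrArg Complex.re h
    simp only [Complex.re_ofReal_mul, Complex.neg_re, Complex.add_re, Complex.sub_re] at hre2
    rw [← mul_div_assoc, div_eq_iff (ne_of_gt (hΘ j))]
    linear_combination hre2
  -- cross terms
  have hSp : (∑ i, ((starRingEnd ℂ) (x3 i) * (∑ j, (P i j : ℂ) * x3 j)).re) = 0 := by
    have hexp : (∑ i, ((starRingEnd ℂ) (x3 i) * (∑ j, (P i j : ℂ) * x3 j)).re)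
        = ∑ i, ∑ j, P i j * ((starRingEnd ℂ) (x3 i) * x3 j).re := by
      refine Finset.sum_congr rfl fun i _ => ?_
      rw [Finset.mul_sum, Complex.re_sum]
      refine Finset.sum_congr rfl fun j _ => ?_
      rw [show (starRingEnd ℂ) (x3 i) * ((P i j : ℂ) * x3 j)
          = (P i j : ℂ) * ((starRingEnd ℂ) (x3 i) * x3 j) by ring]
      rw [Complex.re_ofReal_mul]
    rw [hexp]
    have hanti : ∀ i j, P j i = -(P i j) := by
      intro i j
      have := congrFun (congrFun hP i) j
      simpa [Matrix.transpose_apply, Matrix.neg_apply] using this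
    have h2 : (∑ i, ∑ j, P i j * ((starRingEnd ℂ) (x3 i) * x3 j).re)
        = -(∑ i, ∑ j, P i j * ((starRingEnd ℂ) (x3 i) * x3 j).re) := by
      nth_rewrite 1 [Finset.sum_comm]
      rw [← Finset.sum_neg_distrib]
      refine Finset.sum_congr rfl fun i _ => ?_
      rw [← Finset.sum_neg_distrib]
      refine Finset.sum_congr rfl fun j _ => ?_
      rw [hanti i j, reconj (x3 j) (x3 i)]
      ring
    linarith [h2]
  have hSd : (∑ i, ((starRingEnd ℂ) (x3 i) * (∑ j, (K j i : ℂ) * x4 j)).re)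
      = ∑ j, ((starRingEnd ℂ) (x4 j) * (∑ i, (K j i : ℂ) * x3 i)).re := by
    have lhs : (∑ i, ((starRingEnd ℂ) (x3 i) * (∑ j, (K j i : ℂ) * x4 j)).re)
        = ∑ i, ∑ j, K j i * ((starRingEnd ℂ) (x3 i) * x4 j).re := by
      refine Finset.sum_congr rfl fun i _ => ?_
      rw [Finset.mul_sum, Complex.re_sum]
      refine Finset.sum_congr rfl fun j _ => ?_
      rw [show (starRingEnd ℂ) (x3 i) * ((K j i : ℂ) * x4 j)
          = (K j i : ℂ) * ((starRingEnd ℂ) (x3 i) * x4 j) by ring]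
      rw [Complex.re_ofReal_mul]
    have rhs : (∑ j, ((starRingEnd ℂ) (x4 j) * (∑ i, (K j i : ℂ) * x3 i)).re)
        = ∑ j, ∑ i, K j i * ((starRingEnd ℂ) (x3 i) * x4 j).re := by
      refine Finset.sum_congr rfl fun j _ => ?_
      rw [Finset.mul_sum, Complex.re_sum]
      refine Finset.sum_congr rfl fun i _ => ?_
      rw [show (starRingEnd ℂ) (x4 j) * ((K j i : ℂ) * x3 i)
          = (K j i : ℂ) * ((starRingEnd ℂ) (x4 j) * x3 i) by ring]
      rw [Complex.re_ofReal_mul, reconj (x4 j) (x3 i)]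
    rw [lhs, rhs, Finset.sum_comm]
  -- the Z term
  have hSf : (∑ j, ((starRingEnd ℂ) (x4 j) * (∑ l, (Z j l : ℂ) * x4 l)).re)
      = (∑ j, ∑ l, Z j l * (x4 j).re * (x4 l).re)
        + (∑ j, ∑ l, Z j l * (x4 j).im * (x4 l).im) := by
    rw [← Finset.sum_add_distrib]
    refine Finset.sum_congr rfl fun j _ => ?_
    rw [Finset.mul_sum, Complex.re_sum, ← Finset.sum_add_distrib]
    refine Finset.sum_congr rfl fun l _ => ?_
    rw [show (starRingEnd ℂ) (x4 j) * ((Z j l : ℂ) * x4 l)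
        = (Z j l : ℂ) * ((starRingEnd ℂ) (x4 j) * x4 l) by ring]
    rw [Complex.re_ofReal_mul, reconj_coord]
    ring
  -- master identity
  have master : μ.re * ((∑ i, Complex.normSq (x1 i) / Γ i i)
        + (∑ i, Complex.normSq (x2 i) / Ξ i i)
        + (∑ i, Complex.normSq (x3 i) / Pi' i i)
        + (∑ j, Complex.normSq (x4 j) / Θ j j))
      = -(∑ i, (Υ i i / Ξ i i) * Complex.normSq (x2 i))
        + (∑ j, ∑ l, Z j l * (x4 j).re * (x4 l).re)
        + (∑ j, ∑ l, Z j l * (x4 j).im * (x4 l).im) := by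
    rw [mul_add, mul_add, mul_add, Finset.mul_sum, Finset.mul_sum, Finset.mul_sum,
      Finset.mul_sum]
    rw [Finset.sum_congr rfl fun i _ => r1 i, Finset.sum_congr rfl fun i _ => r2 i,
      Finset.sum_congr rfl fun i _ => r3 i, Finset.sum_congr rfl fun j _ => r4 j]
    simp only [Finset.sum_sub_distrib, Finset.sum_add_distrib, Finset.sum_neg_distrib]
    rw [hSp, hSd, hSf]
    have c1 : (∑ i, ((starRingEnd ℂ) (x2 i) * x1 i).re)
        = ∑ i, ((starRingEnd ℂ) (x1 i) * x2 i).re :=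
      Finset.sum_congr rfl fun i _ => reconj _ _
    have c2 : (∑ i, ((starRingEnd ℂ) (x3 i) * x2 i).re)
        = ∑ i, ((starRingEnd ℂ) (x2 i) * x3 i).re :=
      Finset.sum_congr rfl fun i _ => reconj _ _
    rw [c1, c2]
    ring
  -- nonnegativity facts
  have hNnn : 0 ≤ (∑ i, Complex.normSq (x1 i) / Γ i i)
      + (∑ i, Complex.normSq (x2 i) / Ξ i i)
      + (∑ i, Complex.normSq (x3 i) / Pi' i i)
      + (∑ j, Complex.normSq (x4 j) / Θ j j) := by
    have t1 : 0 ≤ ∑ i, Complex.normSq (x1 i) / Γ i i :=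
      Finset.sum_nonneg fun i _ => div_nonneg (Complex.normSq_nonneg _) (le_of_lt (hΓ i))
    have t2 : 0 ≤ ∑ i, Complex.normSq (x2 i) / Ξ i i :=
      Finset.sum_nonneg fun i _ => div_nonneg (Complex.normSq_nonneg _) (le_of_lt (hΞ i))
    have t3 : 0 ≤ ∑ i, Complex.normSq (x3 i) / Pi' i i :=
      Finset.sum_nonneg fun i _ => div_nonneg (Complex.normSq_nonneg _) (le_of_lt (hPi i))
    have t4 : 0 ≤ ∑ j, Complex.normSq (x4 j) / Θ j j :=
      Finset.sum_nonneg fun j _ => div_nonneg (Complex.normSq_nonneg _) (le_of_lt (hΘ j))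
    linarith
  have hUnn : 0 ≤ ∑ i, (Υ i i / Ξ i i) * Complex.normSq (x2 i) :=
    Finset.sum_nonneg fun i _ =>
      mul_nonneg (div_nonneg (le_of_lt (hΥ i)) (le_of_lt (hΞ i))) (Complex.normSq_nonneg _)
  have hQaZ := quad_neg hZ (fun j => (x4 j).re)
  have hQbZ := quad_neg hZ (fun j => (x4 j).im)
  have hlhs : 0 ≤ μ.re * ((∑ i, Complex.normSq (x1 i) / Γ i i)
      + (∑ i, Complex.normSq (x2 i) / Ξ i i)
      + (∑ i, Complex.normSq (x3 i) / Pi' i i)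
      + (∑ j, Complex.normSq (x4 j) / Θ j j)) := mul_nonneg hre hNnn
  have hU0 : (∑ i, (Υ i i / Ξ i i) * Complex.normSq (x2 i)) = 0 := by
    linarith [master, hQaZ.1, hQbZ.1, hlhs]
  have hQa0 : (∑ j, ∑ l, Z j l * (x4 j).re * (x4 l).re) = 0 := by
    linarith [master, hQaZ.1, hQbZ.1, hlhs]
  have hQb0 : (∑ j, ∑ l, Z j l * (x4 j).im * (x4 l).im) = 0 := by
    linarith [master, hQaZ.1, hQbZ.1, hlhs]
  -- x2 = 0
  have hx2zero : ∀ i, x2 i = 0 := by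
    intro i
    have hterms : ∀ i ∈ (Finset.univ : Finset (Fin n)),
        (0:ℝ) ≤ (Υ i i / Ξ i i) * Complex.normSq (x2 i) :=
      fun i _ => mul_nonneg (div_nonneg (le_of_lt (hΥ i)) (le_of_lt (hΞ i)))
        (Complex.normSq_nonneg _)
    have hzero := (Finset.sum_eq_zero_iff_of_nonneg hterms).mp hU0 i (Finset.mem_univ i)
    have hpos : 0 < Υ i i / Ξ i i := div_pos (hΥ i) (hΞ i)
    have hnsq : Complex.normSq (x2 i) = 0 := by
      by_contra hne
      exact (mul_ne_zero (ne_of_gt hpos) hne) hzero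
    exact Complex.normSq_eq_zero.mp hnsq
  -- x4 = 0
  have hazero := hQaZ.2 hQa0
  have hbzero := hQbZ.2 hQb0
  have hx4zero : ∀ j, x4 j = 0 := fun j =>
    Complex.ext (congrFun hazero j) (congrFun hbzero j)
  -- x1 = x3, then K x3 = 0, then all zero
  have hx13 : ∀ i, x1 i = x3 i := by
    intro i
    have h := E2' i
    rw [hx2zero i] at h
    simp only [mul_zero] at h
    have hsub : (Ξ i i : ℂ) * x1 i - (Ξ i i : ℂ) * x3 i = 0 := by linear_combination -h
    have hne : (Ξ i i : ℂ) ≠ 0 := by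
      simp only [ne_eq, Complex.ofReal_eq_zero]
      exact ne_of_gt (hΞ i)
    exact mul_left_cancel₀ hne (sub_eq_zero.mp hsub)
  have hKx3 : ∀ j, (∑ i, (K j i : ℂ) * x3 i) = 0 := by
    intro j
    have h := E4' j
    rw [hx4zero j] at h
    simp only [mul_zero] at h
    have hzl : (∑ l, (Z j l : ℂ) * x4 l) = 0 :=
      Finset.sum_eq_zero fun l _ => by rw [hx4zero l]; ring
    rw [hzl, mul_zero, add_zero] at h
    have hne : (Θ j j : ℂ) ≠ 0 := by
      simp only [ne_eq, Complex.ofReal_eq_zero]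
      exact ne_of_gt (hΘ j)
    exact (mul_eq_zero.mp h.symm).resolve_left hne
  have hx3zero : ∀ i, x3 i = 0 := by
    have hre3 : K.mulVec (fun i => (x3 i).re) = 0 := by
      funext j
      have h := congrArg Complex.re (hKx3 j)
      rw [Complex.re_sum] at h
      simpa [Matrix.mulVec, dotProduct, Complex.mul_re] using h
    have him3 : K.mulVec (fun i => (x3 i).im) = 0 := by
      funext j
      have h := congrArg Complex.im (hKx3 j)
      rw [Complex.im_sum] at h
      simpa [Matrix.mulVec, dotProduct, Complex.mul_im] using h
    have h1 := hK _ hre3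
    have h2 := hK _ him3
    intro i
    exact Complex.ext (congrFun h1 i) (congrFun h2 i)
  have hx1zero : ∀ i, x1 i = 0 := fun i => (hx13 i).trans (hx3zero i)
  apply hv
  funext s
  rcases s with (i | i) | (i | j)
  · exact hx1zero i
  · exact hx2zero i
  · exact hx3zero i
  · exact hx4zero j
end

section
/- Let Γ, Π, Ξ, Υ ∈ ℝ^{n×n} and Θ ∈ ℝ^{m×m} be diagonal with positive entries, K ∈ ℝ^{m×n}, P skew-symmetric, Z + Zᵀ negative definite, and let B be the block matrix [[0, −Γ, 0, 0], [Ξ, −Υ, −Ξ, 0], [0, Π, ΠP, −ΠKᵀ], [0, 0, ΘK, ΘZ]]. Define V(x₁,x₂,x₃,x₄) = (1/2)(x₁ᵀΓ⁻¹x₁ + x₂ᵀΞ⁻¹x₂ + x₃ᵀΠ⁻¹x₃ + x₄ᵀΘ⁻¹x₄). Then along solutions of ẋ = Bx, the derivative of V satisfies V̇(x) = −x₂ᵀΥΞ⁻¹x₂ + (1/2)x₄ᵀ(Z + Zᵀ)x₄ ≤ 0. -/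
open Matrix

private lemma isUnit_det_of_diag {k : ℕ} (D : Matrix (Fin k) (Fin k) ℝ)
    (hD : D.IsDiag) (hpos : ∀ i, 0 < D i i) : IsUnit D.det := by
  rw [← hD.diagonal_diag, det_diagonal]
  exact (Finset.prod_pos fun i _ => hpos i).ne'.isUnit

private lemma inv_dot {k l : ℕ} (D : Matrix (Fin k) (Fin k) ℝ)
    (hD : D.IsDiag) (hpos : ∀ i, 0 < D i i) (A : Matrix (Fin k) (Fin l) ℝ)
    (u : Fin k → ℝ) (v : Fin l → ℝ) :
    (D⁻¹ *ᵥ u) ⬝ᵥ (A *ᵥ v) = u ⬝ᵥ ((D⁻¹ * A) *ᵥ v) := by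
  have hsym : (D⁻¹)ᵀ = D⁻¹ := by
    rw [← hD.diagonal_diag, inv_diagonal, diagonal_transpose]
  rw [dotProduct_comm, dotProduct_mulVec, ← mulVec_transpose, hsym,
    dotProduct_comm, ← mulVec_mulVec, dotProduct_mulVec, dotProduct_mulVec,
    vecMul_vecMul]

private lemma inv_diag_eq {k : ℕ} (D : Matrix (Fin k) (Fin k) ℝ)
    (hD : D.IsDiag) (hpos : ∀ i, 0 < D i i) :
    D⁻¹ = diagonal (fun i => (D i i)⁻¹) := by
  apply inv_eq_right_inv
  conv_lhs => rw [← hD.diagonal_diag]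
  rw [diagonal_mul_diagonal]
  ext i j
  rcases eq_or_ne i j with rfl | h
  · simp [mul_inv_cancel₀ (hpos i).ne']
  · simp [Matrix.diagonal_apply_ne _ h, Matrix.one_apply_ne h]

private lemma inv_cancel {k l : ℕ} (D : Matrix (Fin k) (Fin k) ℝ)
    (hD : D.IsDiag) (hpos : ∀ i, 0 < D i i) (A : Matrix (Fin k) (Fin l) ℝ) :
    D⁻¹ * (D * A) = A := by
  rw [← Matrix.mul_assoc, nonsing_inv_mul D (isUnit_det_of_diag D hD hpos), Matrix.one_mul]

/-- Along solutions of `ẋ = Bx`, with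
`V(x) = (1/2)(x₁ᵀΓ⁻¹x₁ + x₂ᵀΞ⁻¹x₂ + x₃ᵀΠ⁻¹x₃ + x₄ᵀΘ⁻¹x₄)`, the Lie derivative
`V̇(x) = ⟨∇V(x), Bx⟩` equals `−x₂ᵀΥΞ⁻¹x₂ + (1/2)x₄ᵀ(Z + Zᵀ)x₄`, which is `≤ 0`. -/
theorem lyapunov_derivative {n m : ℕ}
    (Γ Pi' Ξ Υ P : Matrix (Fin n) (Fin n) ℝ)
    (Θ Z : Matrix (Fin m) (Fin m) ℝ) (K : Matrix (Fin m) (Fin n) ℝ)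
    (hΓd : Γ.IsDiag) (hPid : Pi'.IsDiag) (hΞd : Ξ.IsDiag) (hΥd : Υ.IsDiag)
    (hΘd : Θ.IsDiag)
    (hΓ : ∀ i, 0 < Γ i i) (hPi : ∀ i, 0 < Pi' i i)
    (hΞ : ∀ i, 0 < Ξ i i) (hΥ : ∀ i, 0 < Υ i i) (hΘ : ∀ i, 0 < Θ i i)
    (hP : Pᵀ = -P)
    (hZ : (-(Z + Zᵀ)).PosDef)
    (x₁ x₂ x₃ : Fin n → ℝ) (x₄ : Fin m → ℝ) :
    let B := Matrix.fromBlocks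
      (Matrix.fromBlocks 0 (-Γ) Ξ (-Υ))
      (Matrix.fromBlocks 0 0 (-Ξ) 0)
      (Matrix.fromBlocks 0 Pi' 0 0)
      (Matrix.fromBlocks (Pi' * P) (-(Pi' * Kᵀ)) (Θ * K) (Θ * Z))
    let x : (Fin n ⊕ Fin n) ⊕ (Fin n ⊕ Fin m) → ℝ :=
      Sum.elim (Sum.elim x₁ x₂) (Sum.elim x₃ x₄)
    let gradV : (Fin n ⊕ Fin n) ⊕ (Fin n ⊕ Fin m) → ℝ :=
      Sum.elim (Sum.elim (Γ⁻¹.mulVec x₁) (Ξ⁻¹.mulVec x₂))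
        (Sum.elim (Pi'⁻¹.mulVec x₃) (Θ⁻¹.mulVec x₄))
    gradV ⬝ᵥ B.mulVec x
        = -(x₂ ⬝ᵥ (Υ * Ξ⁻¹).mulVec x₂) + (1 / 2) * (x₄ ⬝ᵥ (Z + Zᵀ).mulVec x₄) ∧
      gradV ⬝ᵥ B.mulVec x ≤ 0 := by
  intro B x gradV
  have key : gradV ⬝ᵥ B.mulVec x
      = -(x₂ ⬝ᵥ (Υ * Ξ⁻¹).mulVec x₂) + (1 / 2) * (x₄ ⬝ᵥ (Z + Zᵀ).mulVec x₄) := by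
    have hx : B.mulVec x = Sum.elim
        (Sum.elim ((-Γ) *ᵥ x₂) (Ξ *ᵥ x₁ + (-Υ) *ᵥ x₂ + (-Ξ) *ᵥ x₃))
        (Sum.elim (Pi' *ᵥ x₂ + (Pi' * P) *ᵥ x₃ + (-(Pi' * Kᵀ)) *ᵥ x₄)
          ((Θ * K) *ᵥ x₃ + (Θ * Z) *ᵥ x₄)) := by
      show (fromBlocks _ _ _ _) *ᵥ _ = _
      rw [fromBlocks_mulVec]
      simp only [x, Sum.elim_comp_inl, Sum.elim_comp_inr, fromBlocks_mulVec]
      ext i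
      rcases i with (i | i) | (i | i) <;>
        simp [zero_mulVec, mulVec_zero] <;> ring
    rw [hx]
    simp only [gradV, sumElim_dotProduct_sumElim, dotProduct_add]
    rw [inv_dot Γ hΓd hΓ, inv_dot Ξ hΞd hΞ, inv_dot Ξ hΞd hΞ, inv_dot Ξ hΞd hΞ,
      inv_dot Pi' hPid hPi, inv_dot Pi' hPid hPi, inv_dot Pi' hPid hPi,
      inv_dot Θ hΘd hΘ, inv_dot Θ hΘd hΘ]
    have c1 : Γ⁻¹ * -Γ = -1 := by
      rw [Matrix.mul_neg, nonsing_inv_mul Γ (isUnit_det_of_diag Γ hΓd hΓ)]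
    have c2 : Ξ⁻¹ * Ξ = 1 := nonsing_inv_mul Ξ (isUnit_det_of_diag Ξ hΞd hΞ)
    have c3 : Ξ⁻¹ * -Υ = -(Υ * Ξ⁻¹) := by
      rw [Matrix.mul_neg]
      congr 1
      rw [inv_diag_eq Ξ hΞd hΞ]
      conv_lhs => rw [← hΥd.diagonal_diag]
      conv_rhs => rw [← hΥd.diagonal_diag]
      rw [diagonal_mul_diagonal, diagonal_mul_diagonal]
      ext i j
      rcases eq_or_ne i j with rfl | h
      · simp [mul_comm]
      · simp [Matrix.diagonal_apply_ne _ h]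
    have c4 : Ξ⁻¹ * -Ξ = -1 := by rw [Matrix.mul_neg, c2]
    have c5 : Pi'⁻¹ * Pi' = 1 := nonsing_inv_mul Pi' (isUnit_det_of_diag Pi' hPid hPi)
    have c6 : Pi'⁻¹ * (Pi' * P) = P := inv_cancel Pi' hPid hPi P
    have c7 : Pi'⁻¹ * -(Pi' * Kᵀ) = -Kᵀ := by
      rw [Matrix.mul_neg, inv_cancel Pi' hPid hPi]
    have c8 : Θ⁻¹ * (Θ * K) = K := inv_cancel Θ hΘd hΘ K
    have c9 : Θ⁻¹ * (Θ * Z) = Z := inv_cancel Θ hΘd hΘ Z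
    rw [c1, c2, c3, c4, c5, c6, c7, c8, c9]
    simp only [neg_mulVec, one_mulVec, dotProduct_neg]
    have hskew : x₃ ⬝ᵥ (P *ᵥ x₃) = 0 := by
      have : x₃ ⬝ᵥ (P *ᵥ x₃) = -(x₃ ⬝ᵥ (P *ᵥ x₃)) := by
        conv_lhs => rw [dotProduct_mulVec, ← mulVec_transpose, hP, neg_mulVec,
          dotProduct_comm, dotProduct_neg]
      linarith
    have hK : x₃ ⬝ᵥ (Kᵀ *ᵥ x₄) = x₄ ⬝ᵥ (K *ᵥ x₃) := by
      rw [dotProduct_mulVec, vecMul_transpose, dotProduct_comm]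
    have hZZ : x₄ ⬝ᵥ ((Z + Zᵀ) *ᵥ x₄) = 2 * (x₄ ⬝ᵥ (Z *ᵥ x₄)) := by
      rw [add_mulVec, dotProduct_add, mulVec_transpose, dotProduct_mulVec,
        dotProduct_comm]
      ring
    rw [dotProduct_comm x₂ x₁, dotProduct_comm x₃ x₂, hskew, hK, hZZ]
    ring
  refine ⟨key, ?_⟩
  rw [key]
  have h1 : 0 ≤ x₂ ⬝ᵥ (Υ * Ξ⁻¹) *ᵥ x₂ := by
    have hdg : Υ * Ξ⁻¹ = diagonal (fun i => Υ i i * (Ξ i i)⁻¹) := by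
      rw [inv_diag_eq Ξ hΞd hΞ]
      conv_lhs => rw [← hΥd.diagonal_diag]
      rw [diagonal_mul_diagonal]
      rfl
    rw [hdg]
    simp only [dotProduct, mulVec_diagonal]
    refine Finset.sum_nonneg fun i _ => ?_
    have := (hΥ i).le
    have := (hΞ i).le
    have : (0:ℝ) ≤ (Ξ i i)⁻¹ := inv_nonneg.mpr this
    nlinarith [sq_nonneg (x₂ i), mul_nonneg (hΥ i).le this]
  have h2 : x₄ ⬝ᵥ (Z + Zᵀ) *ᵥ x₄ ≤ 0 := by
    have := hZ.posSemidef.dotProduct_mulVec_nonneg x₄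
    simp only [star_trivial, neg_mulVec, dotProduct_neg] at this
    linarith
  linarith
end

section
/- Let Z ∈ ℝ^{m×m} be such that Z + Zᵀ is negative definite, and let Θ ∈ ℝ^{m×m} be diagonal with positive entries. Then ΘZ is Hurwitz. -/
open Matrix

lemma re_dot_complexify {m : ℕ} {M : Matrix (Fin m) (Fin m) ℝ} (hM : M.PosDef)
    {v : Fin m → ℂ} (hv : v ≠ 0) :
    0 < (star v ⬝ᵥ ((M.map Complex.ofReal) *ᵥ v)).re := by
  set a : Fin m → ℝ := fun i => (v i).re with ha
  set b : Fin m → ℝ := fun i => (v i).im with hb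
  have key : (star v ⬝ᵥ ((M.map Complex.ofReal) *ᵥ v)).re
      = a ⬝ᵥ (M *ᵥ a) + b ⬝ᵥ (M *ᵥ b) := by
    simp only [dotProduct, mulVec, Pi.star_apply, Complex.re_sum, map_sum, Matrix.map_apply]
    rw [← Finset.sum_add_distrib]
    refine Finset.sum_congr rfl fun i _ => ?_
    simp only [Finset.mul_sum, Complex.re_sum, Finset.mul_sum, ← Finset.sum_add_distrib]
    refine Finset.sum_congr rfl fun j _ => ?_
    simp [Complex.mul_re, ha, hb]
  rw [key]
  have hab : a ≠ 0 ∨ b ≠ 0 := by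
    by_contra h
    push_neg at h
    apply hv
    funext i
    have h1 := congrFun h.1 i
    have h2 := congrFun h.2 i
    exact Complex.ext h1 h2
  have hsa : 0 ≤ a ⬝ᵥ (M *ᵥ a) := by simpa using hM.posSemidef.dotProduct_mulVec_nonneg a
  have hsb : 0 ≤ b ⬝ᵥ (M *ᵥ b) := by simpa using hM.posSemidef.dotProduct_mulVec_nonneg b
  rcases hab with h | h
  · have := hM.dotProduct_mulVec_pos h
    simp only [star_trivial] at this
    linarith
  · have := hM.dotProduct_mulVec_pos h
    simp only [star_trivial] at this
    linarith

/-- If `Z + Zᵀ` is negative definite and `Θ` is diagonal with positive entries,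
then `ΘZ` is Hurwitz. -/
theorem theta_z_hurwitz {m : ℕ} (Θ Z : Matrix (Fin m) (Fin m) ℝ)
    (hΘd : Θ.IsDiag) (hΘ : ∀ i, 0 < Θ i i) (hZ : (-(Z + Zᵀ)).PosDef) :
    IsHurwitz (Θ * Z) := by
  intro μ hμ
  set Z' : Matrix (Fin m) (Fin m) ℂ := Z.map Complex.ofReal with hZ'
  set d : Fin m → ℂ := fun i => (Θ i i : ℂ) with hd
  have hmap : (Θ * Z).map Complex.ofReal = diagonal d * Z' := by
    have : (Θ * Z).map (Complex.ofRealHom : ℝ →+* ℂ)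
        = Θ.map Complex.ofRealHom * Z.map Complex.ofRealHom := Matrix.map_mul
    rw [show (Complex.ofReal : ℝ → ℂ) = ⇑Complex.ofRealHom from rfl, this]
    congr 1
    conv_lhs => rw [← hΘd.diagonal_diag]
    rw [Matrix.diagonal_map (by simp)]
    rfl
  rw [hmap] at hμ
  rw [← AlgEquiv.spectrum_eq (Matrix.toLinAlgEquiv <| Pi.basisFun ℂ (Fin m)),
    ← Module.End.hasEigenvalue_iff_mem_spectrum] at hμ
  obtain ⟨v, hv⟩ := hμ.exists_hasEigenvector
  have hv0 : v ≠ 0 := hv.2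
  have heig : (diagonal d * Z') *ᵥ v = μ • v := by
    have h := hv.apply_eq_smul
    rwa [show ((Matrix.toLinAlgEquiv (Pi.basisFun ℂ (Fin m))) (diagonal d * Z')) v
      = (diagonal d * Z') *ᵥ v from rfl] at h
  -- componentwise
  have hcomp : ∀ i, (Z' *ᵥ v) i = μ * v i / d i := by
    intro i
    have h1 : (diagonal d *ᵥ (Z' *ᵥ v)) i = μ * v i := by
      rw [Matrix.mulVec_mulVec, heig]; simp
    rw [mulVec_diagonal] at h1
    have hdne : d i ≠ 0 := by
      simp only [hd, ne_eq, Complex.ofReal_eq_zero]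
      exact (hΘ i).ne'
    field_simp
    rw [mul_comm] at h1
    try rw [h1]
    try ring
    try linear_combination h1
  set c : ℝ := ∑ i, Complex.normSq (v i) / Θ i i with hc
  have hcpos : 0 < c := by
    obtain ⟨i, hi⟩ : ∃ i, v i ≠ 0 := by
      by_contra h; push_neg at h; exact hv0 (funext h)
    refine Finset.sum_pos' (fun j _ => ?_) ⟨i, Finset.mem_univ i, ?_⟩
    · exact div_nonneg (Complex.normSq_nonneg _) (hΘ j).le
    · exact div_pos (by simpa [Complex.normSq_pos] using hi) (hΘ i)
  have hq : star v ⬝ᵥ (Z' *ᵥ v) = μ * (c : ℂ) := by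
    simp only [dotProduct, Pi.star_apply]
    have : ∀ i, star (v i) * (Z' *ᵥ v) i = μ * ((Complex.normSq (v i) / Θ i i : ℝ) : ℂ) := by
      intro i
      rw [hcomp i, hd]
      push_cast
      rw [Complex.normSq_eq_conj_mul_self, Complex.star_def]
      ring
    rw [Finset.sum_congr rfl fun i _ => this i, ← Finset.mul_sum]
    congr 1
    push_cast [hc]
    rfl
  -- conjugate relation
  have hconj : (starRingEnd ℂ) (star v ⬝ᵥ (Z' *ᵥ v)) = star v ⬝ᵥ ((Zᵀ.map Complex.ofReal) *ᵥ v) := by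
    simp only [dotProduct, mulVec, map_sum, _root_.map_mul, Pi.star_apply, Matrix.map_apply,
      Complex.star_def, Finset.mul_sum]
    rw [Finset.sum_comm]
    refine Finset.sum_congr rfl fun i _ => Finset.sum_congr rfl fun j _ => ?_
    simp [hZ', Matrix.transpose_apply, Matrix.map_apply, Complex.conj_conj, Complex.conj_ofReal]
    ring
  have hsum : star v ⬝ᵥ (((Z + Zᵀ).map Complex.ofReal) *ᵥ v)
      = star v ⬝ᵥ (Z' *ᵥ v) + (starRingEnd ℂ) (star v ⬝ᵥ (Z' *ᵥ v)) := by
    rw [hconj]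
    rw [show (Z + Zᵀ).map (Complex.ofReal) = Z' + Zᵀ.map Complex.ofReal by
      simp [hZ', Matrix.map_add]]
    rw [Matrix.add_mulVec, dotProduct_add]
  have hneg : (star v ⬝ᵥ (((Z + Zᵀ).map Complex.ofReal) *ᵥ v)).re < 0 := by
    have h1 := re_dot_complexify hZ hv0
    have h2 : ((-(Z + Zᵀ)).map Complex.ofReal) = -((Z + Zᵀ).map Complex.ofReal) := by
      ext i j
      simp [Matrix.map_apply]
    rw [h2] at h1
    simp only [Matrix.neg_mulVec, dotProduct_neg, Complex.neg_re] at h1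
    linarith
  rw [hsum] at hneg
  simp only [Complex.add_re, Complex.conj_re] at hneg
  have hqre : (star v ⬝ᵥ (Z' *ᵥ v)).re = μ.re * c := by
    rw [hq]
    simp [Complex.mul_re]
  rw [hqre] at hneg
  nlinarith
end
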